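/- Suppose given functors J : C → D, J' : C' → D', R : C → C', S : D → D' with a natural isomorphism J ∘ S ≅ R ∘ J', such that S preserves pullbacks, S is full and faithful, and R is full and essentially surjective. Then a morphism p : Ũ → U in D is a weak J-relative universe if and only if S(p) is a weak J'-relative universe. -/

import Mathlib

open CategoryTheory Limits Opposite

universe v v' v₂ u u' u₂ u₃ u₄

/-- An object extension structure on a category `C`. -/
structure ObjExtStructure (C : Type u) [Category.{v} C] where
  Ty : Cᵒᵖ ⥤ Type v
  ext : ∀ (Γ : C), Ty.obj (op Γ) → C
  π : ∀ (Γ : C) (A : Ty.obj (op Γ)), ext Γ A ⟶ Γ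

/-- A representation of the fiber of a map of presheaves `p : Tm ⟶ Ty` over `A : Ty(Γ)`. -/
structure FiberRepresentation {C : Type u} [Category.{v} C] {Ty Tm : Cᵒᵖ ⥤ Type v}
    (p : Tm ⟶ Ty) (Γ : C) (A : Ty.obj (op Γ)) where
  ext : C
  π : ext ⟶ Γ
  te : Tm.obj (op ext)
  te_p : p.app (op ext) te = Ty.map π.op A
  isPB : IsPullback (yonedaEquiv.symm te) (yoneda.map π) p (yonedaEquiv.symm A)

/-- A CwF structure (à la Fiore) on a category `C`. -/
structure CwFStructure (C : Type u) [Category.{v} C] where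
  Ty : Cᵒᵖ ⥤ Type v
  Tm : Cᵒᵖ ⥤ Type v
  p : Tm ⟶ Ty
  rep : ∀ (Γ : C) (A : Ty.obj (op Γ)), FiberRepresentation p Γ A

/-- A (functional) term-structure over an object extension structure `X`. -/
structure TermStructure {C : Type u} [Category.{v} C] (X : ObjExtStructure C) where
  Tm : Cᵒᵖ ⥤ Type v
  p : Tm ⟶ X.Ty
  te : ∀ (Γ : C) (A : X.Ty.obj (op Γ)), Tm.obj (op (X.ext Γ A))
  te_p : ∀ Γ A, p.app _ (te Γ A) = X.Ty.map (X.π Γ A).op A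
  isPB : ∀ Γ A, IsPullback (yonedaEquiv.symm (te Γ A)) (yoneda.map (X.π Γ A)) p (yonedaEquiv.symm A)

/-- A (split) q-morphism structure over an object extension structure `X`. -/
structure qMorphismStructure {C : Type u} [Category.{v} C] (X : ObjExtStructure C) where
  q : ∀ {Γ' Γ : C} (f : Γ' ⟶ Γ) (A : X.Ty.obj (op Γ)),
      X.ext Γ' (X.Ty.map f.op A) ⟶ X.ext Γ A
  isPB : ∀ {Γ' Γ : C} (f : Γ' ⟶ Γ) (A : X.Ty.obj (op Γ)),
      IsPullback (q f A) (X.π Γ' (X.Ty.map f.op A)) (X.π Γ A) f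
  q_id : ∀ (Γ : C) (A : X.Ty.obj (op Γ)), q (𝟙 Γ) A = eqToHom (by simp)
  q_comp : ∀ {Γ'' Γ' Γ : C} (f' : Γ'' ⟶ Γ') (f : Γ' ⟶ Γ) (A : X.Ty.obj (op Γ)),
      q (f' ≫ f) A = eqToHom (by simp) ≫ q f' (X.Ty.map f.op A) ≫ q f A

/-- Compatibility between a term-structure and a q-morphism structure. -/
def Compatible {C : Type u} [Category.{v} C] {X : ObjExtStructure C}
    (Y : TermStructure X) (Z : qMorphismStructure X) : Prop :=
  ∀ {Γ' Γ : C} (f : Γ' ⟶ Γ) (A : X.Ty.obj (op Γ)),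
    Y.te Γ' (X.Ty.map f.op A) = Y.Tm.map (Z.q f A).op (Y.te Γ A)

/-- A split type-category structure on `C` (Pitts' type-categories, split version). -/
structure SplitTypeCatStructure (C : Type u) [Category.{v} C] where
  Ty : C → Type v
  isSet : ∀ (Γ : C) (A B : Ty Γ) (p q : A = B), p = q
  ext : ∀ Γ, Ty Γ → C
  π : ∀ Γ A, ext Γ A ⟶ Γ
  reind : ∀ {Γ' Γ : C} (_ : Γ' ⟶ Γ), Ty Γ → Ty Γ'
  q : ∀ {Γ' Γ : C} (f : Γ' ⟶ Γ) (A : Ty Γ), ext Γ' (reind f A) ⟶ ext Γ A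
  isPB : ∀ {Γ' Γ : C} (f : Γ' ⟶ Γ) (A : Ty Γ),
      IsPullback (q f A) (π Γ' (reind f A)) (π Γ A) f
  reind_id : ∀ (Γ : C) (A : Ty Γ), reind (𝟙 Γ) A = A
  q_id : ∀ (Γ : C) (A : Ty Γ), q (𝟙 Γ) A = eqToHom (by rw [reind_id])
  reind_comp : ∀ {Γ'' Γ' Γ : C} (f' : Γ'' ⟶ Γ') (f : Γ' ⟶ Γ) (A : Ty Γ),
      reind (f' ≫ f) A = reind f' (reind f A)
  q_comp : ∀ {Γ'' Γ' Γ : C} (f' : Γ'' ⟶ Γ') (f : Γ' ⟶ Γ) (A : Ty Γ),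
      q (f' ≫ f) A = eqToHom (by rw [reind_comp]) ≫ q f' (reind f A) ≫ q f A

/-- A `J`-pullback of `p : Ũ ⟶ U` along `f : J(X) ⟶ U`. -/
structure RelPullback {C : Type u} {D : Type u'} [Category.{v} C] [Category.{v'} D]
    (J : C ⥤ D) {Ut U : D} (p : Ut ⟶ U) (X : C) (f : J.obj X ⟶ U) where
  obj : C
  pr : obj ⟶ X
  Q : J.obj obj ⟶ Ut
  isPB : IsPullback Q (J.map pr) p f

/-- A universe relative to a functor `J`. -/
structure RelUniverse {C : Type u} {D : Type u'} [Category.{v} C] [Category.{v'} D]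
    (J : C ⥤ D) where
  Ut : D
  U : D
  p : Ut ⟶ U
  str : ∀ (X : C) (f : J.obj X ⟶ U), RelPullback J p X f

/-- A weak universe relative to a functor `J`. -/
structure WeakRelUniverse {C : Type u} {D : Type u'} [Category.{v} C] [Category.{v'} D]
    (J : C ⥤ D) where
  Ut : D
  U : D
  p : Ut ⟶ U
  str : ∀ (X : C) (f : J.obj X ⟶ U), Nonempty (RelPullback J p X f)

/-- A category is univalent if `idtoiso` is an equivalence. -/
def IsUnivalentCat (C : Type u) [Category.{v} C] : Prop :=
  ∀ X Y : C, Function.Bijective (fun h : X = Y => eqToIso h)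

/-- A representable map of presheaves on `C`. -/
structure RepMapPresheaves (C : Type u) [Category.{v} C] where
  Ty : Cᵒᵖ ⥤ Type v
  Tm : Cᵒᵖ ⥤ Type v
  p : Tm ⟶ Ty
  rep : ∀ (Γ : C) (A : Ty.obj (op Γ)), Nonempty (FiberRepresentation p Γ A)

/-- The univalence axiom for a universe. -/
def UnivalenceAxiom : Prop :=
  ∀ α β : Type v, Function.Bijective (fun h : α = β => Equiv.cast h)

theorem stmt11 {C : Type u} {D : Type u'} {C' : Type u₂} {D' : Type u₃}
    [Category.{v} C] [Category.{v'} D] [Category.{v₂} C'] [Category.{v'} D']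
    (J : C ⥤ D) (J' : C' ⥤ D') (R : C ⥤ C') (S : D ⥤ D')
    (α : J ⋙ S ≅ R ⋙ J')
    (hS : ∀ {P X Y Z : D} (fst : P ⟶ X) (snd : P ⟶ Y) (f : X ⟶ Z) (g : Y ⟶ Z),
      IsPullback fst snd f g → IsPullback (S.map fst) (S.map snd) (S.map f) (S.map g))
    [S.Full] [S.Faithful] [R.Full] [R.EssSurj]
    {Ut U : D} (p : Ut ⟶ U) :
    (∀ (X : C) (f : J.obj X ⟶ U), Nonempty (RelPullback J p X f)) ↔
    (∀ (X' : C') (f' : J'.obj X' ⟶ S.obj U), Nonempty (RelPullback J' (S.map p) X' f')) := by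
  have : ReflectsLimitsOfSize.{0,0} S := fullyFaithful_reflectsLimits S
  constructor
  · intro h X' f'
    obtain ⟨X, ⟨e⟩⟩ := Functor.EssSurj.mem_essImage (F := R) X'
    set f : J.obj X ⟶ U := S.preimage (α.hom.app X ≫ J'.map e.hom ≫ f') with hf
    obtain ⟨⟨obj, pr, Q, isPB⟩⟩ := h X f
    refine ⟨⟨R.obj obj, R.map pr ≫ e.hom, α.inv.app obj ≫ S.map Q, ?_⟩⟩
    refine (hS _ _ _ _ isPB).of_iso (α.app obj) (Iso.refl _)
      (α.app X ≪≫ J'.mapIso e) (Iso.refl _) ?_ ?_ ?_ ?_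
    · simp
    · have := α.hom.naturality pr
      simp only [Functor.comp_obj, Functor.comp_map] at this
      simp [reassoc_of% this]
    · simp
    · simp [hf]
  · intro h X f
    obtain ⟨⟨obj', pr', Q', isPB⟩⟩ := h (R.obj X) (α.inv.app X ≫ S.map f)
    obtain ⟨Y, ⟨e⟩⟩ := Functor.EssSurj.mem_essImage (F := R) obj'
    set pr : Y ⟶ X := R.preimage (e.hom ≫ pr') with hpr
    set Q : J.obj Y ⟶ Ut := S.preimage (α.hom.app Y ≫ J'.map e.hom ≫ Q') with hQ
    refine ⟨⟨Y, pr, Q, IsPullback.of_map_of_faithful S ?_⟩⟩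
    refine isPB.of_iso ((α.app Y ≪≫ J'.mapIso e).symm) (Iso.refl _)
      ((α.app X).symm) (Iso.refl _) ?_ ?_ ?_ ?_
    · simp [hQ]
    · have := α.hom.naturality pr
      simp only [Functor.comp_obj, Functor.comp_map] at this
      have h2 : S.map (J.map pr) = α.hom.app Y ≫ J'.map (R.map pr) ≫ α.inv.app X := by
        simp [← reassoc_of% this]
      simp only [h2]
      simp [hpr]
    · simp
    · simp
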